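/- Assume the antipode S of A is bijective. If x ∈ (ᴴA)^{⊗n} is A-invariant, then (id^{⊗(n-1)} ⊗ ε)(x) ∈ (ᴴA)^{⊗(n-1)} is H-invariant. -/

import Mathlib

open TensorProduct

universe u

variable (k : Type u) [Field k]
variable (A : Type u) [Ring A] [HopfAlgebra k A]
variable (H : Type u) [Ring H] [HopfAlgebra k H]

/-- The left `H`-coaction `β_L = (π ⊗ id) ∘ Δ : A → H ⊗ A` induced by `π : A → H`. -/
noncomputable def betaL (π : A →ₐc[k] H) : A →ₗ[k] H ⊗[k] A :=
  (TensorProduct.map π.toLinearMap LinearMap.id) ∘ₗ Coalgebra.comul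

/-- The right quantum homogeneous space `ᴴA = {a ∈ A : β_L(a) = 1 ⊗ a}`. -/
def HAset (π : A →ₐc[k] H) : Set A := {a : A | betaL k A H π a = (1 : H) ⊗ₜ[k] a}

/-- The `n`-fold tensor power of `A` over `k` (as a bundled `k`-module), left-nested with
`TP 0 = k`. -/
noncomputable def TP : ℕ → ModuleCat.{u} k
  | 0 => ModuleCat.of k k
  | n + 1 => ModuleCat.of k (TP n ⊗[k] A)

/-- The `n`-fold tensor-power coaction
`βⁿ(a₁ ⊗ ⋯ ⊗ aₙ) = a₁₍₁₎ ⊗ ⋯ ⊗ aₙ₍₁₎ ⊗ (a₁₍₂₎⋯aₙ₍₂₎)` (Sweedler notation). -/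
noncomputable def betaN : (n : ℕ) → (TP k A n →ₗ[k] TP k A n ⊗[k] A)
  | 0 => (TensorProduct.mk k k A).flip 1
  | n + 1 =>
      (TensorProduct.map LinearMap.id (LinearMap.mul' k A)) ∘ₗ
      (TensorProduct.tensorTensorTensorComm k (TP k A n) A A A).toLinearMap ∘ₗ
      (TensorProduct.map (betaN n) (Coalgebra.comul (R := k)))

/-- The subspace `(ᴴA)^{⊗n} ⊆ A^{⊗n}`. -/
noncomputable def HApow (π : A →ₐc[k] H) : (n : ℕ) → Submodule k (TP k A n)
  | 0 => ⊤
  | n + 1 =>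
      Submodule.span k
        {z : TP k A n ⊗[k] A |
          ∃ x ∈ HApow π n, ∃ a ∈ HAset k A H π, z = x ⊗ₜ[k] a}

/-- The map `ρₙ = id^{⊗(n-1)} ⊗ ε : A^{⊗n} → A^{⊗(n-1)}`. -/
noncomputable def epsLast (n : ℕ) : TP k A (n + 1) →ₗ[k] TP k A n :=
  (TensorProduct.rid k (TP k A n)).toLinearMap ∘ₗ
    TensorProduct.map LinearMap.id (Coalgebra.counit (R := k))

/-- The map `(id^{⊗(n-1)} ⊗ S) ∘ β^{n-1} : A^{⊗(n-1)} → A^{⊗n}`. -/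
noncomputable def sLast (n : ℕ) : TP k A n →ₗ[k] TP k A (n + 1) :=
  TensorProduct.map LinearMap.id (HopfAlgebra.antipode (R := k)) ∘ₗ betaN k A n

/-- `x ∈ A^{⊗n}` is `A`-invariant if `βⁿ(x) = x ⊗ 1`. -/
def AInvariant (n : ℕ) (x : TP k A n) : Prop := betaN k A n x = x ⊗ₜ[k] (1 : A)

/-- `x ∈ A^{⊗n}` is `H`-invariant if `(id^{⊗n} ⊗ π)(βⁿ(x)) = x ⊗ 1`. -/
def HInvariant (π : A →ₐc[k] H) (n : ℕ) (x : TP k A n) : Prop :=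
  TensorProduct.map LinearMap.id π.toLinearMap (betaN k A n x) = x ⊗ₜ[k] (1 : H)

section Aux

variable {k A H} in
private lemma rho_aux {M : Type u} [AddCommGroup M] [Module k M] (y : M) (b : A) :
    ((TensorProduct.rid k M).toLinearMap ∘ₗ
      TensorProduct.map LinearMap.id (Coalgebra.counit (R := k))) (y ⊗ₜ[k] b)
      = Coalgebra.counit (R := k) b • y := by
  simp

variable {k A H} in
private lemma mu_aux {M : Type u} [AddCommGroup M] [Module k M] (w : M ⊗[k] H) :
    (TensorProduct.map LinearMap.id (LinearMap.mul' k H))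
      ((TensorProduct.assoc k M H H) (w ⊗ₜ[k] (1 : H))) = w := by
  induction w using TensorProduct.induction_on with
  | zero => simp
  | tmul y h => simp
  | add u v hu hv => rw [TensorProduct.add_tmul, map_add, map_add, hu, hv]

variable {k A H} in
private lemma claim_aux (π : A →ₐc[k] H) {M : Type u} [AddCommGroup M] [Module k M]
    (ρ : M ⊗[k] A →ₗ[k] M)
    (hρ : ∀ (y : M) (b : A), ρ (y ⊗ₜ[k] b) = Coalgebra.counit (R := k) b • y) :
    (TensorProduct.map ρ π.toLinearMap) ∘ₗ
      (TensorProduct.map LinearMap.id (LinearMap.mul' k A)) ∘ₗ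
      (TensorProduct.tensorTensorTensorComm k M A A A).toLinearMap =
    ((TensorProduct.map LinearMap.id (LinearMap.mul' k H)) ∘ₗ
      (TensorProduct.assoc k M H H).toLinearMap) ∘ₗ
      TensorProduct.map (TensorProduct.map LinearMap.id π.toLinearMap)
        (π.toLinearMap ∘ₗ (TensorProduct.lid k A).toLinearMap ∘ₗ
          LinearMap.rTensor A (Coalgebra.counit (R := k))) := by
  ext y b c d
  simp only [LinearMap.comp_apply, AlgebraTensorModule.curry_apply,
    TensorProduct.curry_apply, LinearMap.coe_restrictScalars, LinearEquiv.coe_coe,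
    TensorProduct.tensorTensorTensorComm_tmul, TensorProduct.map_tmul,
    LinearMap.mul'_apply, LinearMap.id_coe, id_eq, LinearMap.rTensor_tmul,
    TensorProduct.lid_tmul, TensorProduct.assoc_tmul, hρ, map_smul,
    TensorProduct.smul_tmul', TensorProduct.smul_tmul, mul_smul_comm]
  exact congrArg (fun h => y ⊗ₜ[k] (Coalgebra.counit (R := k) c • h)) (map_mul π b d)

variable {k A H} in
private lemma key_aux (π : A →ₐc[k] H) {M : Type u} [AddCommGroup M] [Module k M]
    (ρ : M ⊗[k] A →ₗ[k] M)
    (hρ : ∀ (y : M) (b : A), ρ (y ⊗ₜ[k] b) = Coalgebra.counit (R := k) b • y)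
    (u : M ⊗[k] A) (a : A)
    (ha : π a = Coalgebra.counit (R := k) a • (1 : H)) :
    (TensorProduct.map ρ π.toLinearMap)
        ((TensorProduct.map LinearMap.id (LinearMap.mul' k A))
          ((TensorProduct.tensorTensorTensorComm k M A A A)
            (u ⊗ₜ[k] Coalgebra.comul a)))
      = Coalgebra.counit (R := k) a •
          (TensorProduct.map LinearMap.id π.toLinearMap) u := by
  have hc := LinearMap.congr_fun (claim_aux π ρ hρ) (u ⊗ₜ[k] Coalgebra.comul a)
  simp only [LinearMap.comp_apply, LinearEquiv.coe_coe, TensorProduct.map_tmul] at hc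
  rw [hc, Coalgebra.rTensor_counit_comul, TensorProduct.lid_tmul, one_smul]
  erw [ha]
  rw [TensorProduct.tmul_smul, map_smul, map_smul, mu_aux]

end Aux

/-- if the antipode of `A` is bijective and `x ∈ (ᴴA)^{⊗n}` (here `n = m+1`)
is `A`-invariant, then `(id^{⊗(n-1)} ⊗ ε)(x) ∈ (ᴴA)^{⊗(n-1)}` is `H`-invariant. -/


theorem epsLast_HInvariant_of_AInvariant
    (π : A →ₐc[k] H) (hπ : Function.Surjective π)
    (hS : Function.Bijective (HopfAlgebra.antipode (R := k) (A := A))) (m : ℕ)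
    (x : TP k A (m + 1)) (hx : x ∈ HApow k A H π (m + 1))
    (hinv : AInvariant k A (m + 1) x) :
    epsLast k A m x ∈ HApow k A H π m ∧ HInvariant k A H π m (epsLast k A m x) := by
  classical
  set ρ : TP k A (m + 1) →ₗ[k] TP k A m := epsLast k A m with hρdef
  set ψ := TensorProduct.map ρ π.toLinearMap with hψdef
  have hρ : ∀ (y : TP k A m) (b : A), ρ (y ⊗ₜ[k] b) = Coalgebra.counit (R := k) b • y :=
    fun y b => rho_aux y b
  -- π a = ε a • 1 for a ∈ ᴴA
  have hπa : ∀ a ∈ HAset k A H π, π a = Coalgebra.counit (R := k) a • (1 : H) := by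
    intro a ha
    have ha' : (TensorProduct.map π.toLinearMap LinearMap.id) (Coalgebra.comul a)
        = (1 : H) ⊗ₜ[k] a := ha
    have h2 := congrArg (TensorProduct.map (LinearMap.id (R := k) (M := H))
        (Coalgebra.counit (R := k) (A := A))) ha'
    have hcomm : (TensorProduct.map (LinearMap.id (R := k) (M := H))
          (Coalgebra.counit (R := k) (A := A))).comp
          (TensorProduct.map π.toLinearMap LinearMap.id) =
        (TensorProduct.map π.toLinearMap (LinearMap.id (R := k) (M := k))).comp
          (TensorProduct.map LinearMap.id (Coalgebra.counit (R := k))) := by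
      ext; simp
    rw [← LinearMap.comp_apply, hcomm, LinearMap.comp_apply] at h2
    have hl : (TensorProduct.map (LinearMap.id (R := k) (M := A))
        (Coalgebra.counit (R := k) (A := A))) (Coalgebra.comul a) = a ⊗ₜ[k] (1 : k) := by
      have := Coalgebra.lTensor_counit_comul (R := k) a
      simpa [LinearMap.lTensor] using this
    rw [hl] at h2
    simp at h2
    have := congrArg (TensorProduct.rid k H) h2
    simp at this
    exact this
  -- key identity on (ᴴA)^{⊗(m+1)}
  have hB : ∀ z ∈ HApow k A H π (m + 1),
      ψ (betaN k A (m + 1) z) =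
        TensorProduct.map LinearMap.id π.toLinearMap (betaN k A m (ρ z)) := by
    intro z hz
    rw [HApow] at hz
    induction hz using Submodule.span_induction with
    | mem z hz =>
        obtain ⟨x', hx', a, ha, rfl⟩ := hz
        rw [hρ x' a, map_smul, map_smul]
        exact key_aux π ρ hρ (betaN k A m x') a (hπa a ha)
    | zero => simp
    | add u v hu hv h1 h2 => simp only [map_add, h1, h2]
    | smul c u hu h1 => simp only [map_smul, h1]
  have hinv' : betaN k A (m + 1) x = x ⊗ₜ[k] (1 : A) := hinv
  constructor
  · -- ρ x ∈ (ᴴA)^{⊗m}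
    clear hinv hinv' hB
    rw [HApow] at hx
    induction hx using Submodule.span_induction with
    | mem z hz =>
        obtain ⟨x', hx', a, ha, rfl⟩ := hz
        rw [hρ]
        exact Submodule.smul_mem _ _ hx'
    | zero => rw [map_zero]; exact Submodule.zero_mem _
    | add u v hu hv h1 h2 => rw [map_add]; exact Submodule.add_mem _ h1 h2
    | smul c u hu h1 => rw [map_smul]; exact Submodule.smul_mem _ _ h1
  · -- H-invariance
    have h1 := hB x hx
    rw [hinv'] at h1
    have h2 : ψ (x ⊗ₜ[k] (1 : A)) = ρ x ⊗ₜ[k] (1 : H) := by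
      rw [hψdef]
      erw [TensorProduct.map_tmul]
      exact congrArg (fun h => ρ x ⊗ₜ[k] h) (map_one π)
    rw [h2] at h1
    exact h1.symm
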